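/- Let F : ℝ₊ⁿ ⇉ ℝ₊ᵐ be a co-radiant and increasing mapping taking only normal values, with gr(F) closed and nonempty. Then for every (x, y) ∈ (ℝ₊ⁿ × ℝ₊ᵐ) \ gr(F) there exists a convex cone K ⊆ ℝ₊ⁿ × ℝ₊ᵐ containing (x, y) such that K \ {(0,0)} is open in ℝ₊ⁿ × ℝ₊ᵐ and gr(F) ∩ ((x, y) + K + (−ℝ₊ⁿ) × ℝ₊ᵐ) = ∅. -/

import Mathlib

open scoped Pointwise

/-- A set `C ⊆ ℝ₊ᵐ` is normal if `x ∈ C`, `0 ≤ y ≤ x` imply `y ∈ C`. -/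
def IsNormal {m : ℕ} (C : Set (Fin m → ℝ)) : Prop :=
  ∀ x ∈ C, ∀ y : Fin m → ℝ, 0 ≤ y → y ≤ x → y ∈ C

/-- A set-valued mapping `F : ℝ₊ⁿ ⇉ ℝ₊ᵐ` is increasing if `x ≤ y` implies `F x ⊆ F y`. -/
def IncreasingMap {n m : ℕ} (F : (Fin n → ℝ) → Set (Fin m → ℝ)) : Prop :=
  ∀ x y : Fin n → ℝ, 0 ≤ x → x ≤ y → F x ⊆ F y

/-- A set-valued mapping `F : ℝ₊ⁿ ⇉ ℝ₊ᵐ` is co-radiant if `t • F x ⊆ F (t • x)` for every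
`x ∈ ℝ₊ⁿ` and `t ∈ (0, 1]`. -/
def CoRadiantMap {n m : ℕ} (F : (Fin n → ℝ) → Set (Fin m → ℝ)) : Prop :=
  ∀ x : Fin n → ℝ, 0 ≤ x → ∀ t : ℝ, 0 < t → t ≤ 1 → t • F x ⊆ F (t • x)

/-- The graph of a set-valued mapping `F : ℝ₊ⁿ ⇉ ℝ₊ᵐ`, as a subset of `ℝ₊ⁿ × ℝ₊ᵐ`. -/
def graph {n m : ℕ} (F : (Fin n → ℝ) → Set (Fin m → ℝ)) :
    Set ((Fin n → ℝ) × (Fin m → ℝ)) :=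
  {p | 0 ≤ p.1 ∧ p.2 ∈ F p.1}

/-- A set `K` is a cone if `t • k ∈ K` for every `k ∈ K` and `t > 0`. -/
def IsConeSet {E : Type*} [SMul ℝ E] (K : Set E) : Prop :=
  ∀ k ∈ K, ∀ t : ℝ, 0 < t → t • k ∈ K

theorem stmt_15 {n m : ℕ} (F : (Fin n → ℝ) → Set (Fin m → ℝ))
    (hval : ∀ x : Fin n → ℝ, 0 ≤ x → ∀ y ∈ F x, 0 ≤ y)
    (hinc : IncreasingMap F) (hcor : CoRadiantMap F)
    (hnorm : ∀ x : Fin n → ℝ, 0 ≤ x → IsNormal (F x))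
    (hclosed : IsClosed (graph F)) (hne : (graph F).Nonempty) :
    ∀ (x : Fin n → ℝ) (y : Fin m → ℝ), 0 ≤ x → 0 ≤ y → (x, y) ∉ graph F →
      ∃ K : Set ((Fin n → ℝ) × (Fin m → ℝ)),
        K ⊆ {p | 0 ≤ p.1 ∧ 0 ≤ p.2} ∧ Convex ℝ K ∧ IsConeSet K ∧ (x, y) ∈ K ∧
        (∃ U : Set ((Fin n → ℝ) × (Fin m → ℝ)), IsOpen U ∧
          K \ {0} = U ∩ {p | 0 ≤ p.1 ∧ 0 ≤ p.2}) ∧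
        graph F ∩ ({(x, y)} + K +
          {q : Fin n → ℝ | q ≤ 0} ×ˢ {r : Fin m → ℝ | 0 ≤ r}) = ∅ := by
  intro x y hx hy hxy
  -- (0,0) ∈ graph F
  have h0 : ((0 : Fin n → ℝ), (0 : Fin m → ℝ)) ∈ graph F := by
    obtain ⟨⟨u, v⟩, hu, hv⟩ := hne
    have hmem : ∀ k : ℕ, ((k : ℝ) + 1)⁻¹ • ((u, v) : (Fin n → ℝ) × (Fin m → ℝ)) ∈ graph F := by
      intro k
      have hk : (0:ℝ) < (k:ℝ) + 1 := by positivity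
      refine ⟨smul_nonneg (by positivity) hu, ?_⟩
      have h1 : ((k : ℝ) + 1)⁻¹ ≤ 1 := by
        rw [inv_le_one_iff₀]; right; linarith [Nat.cast_nonneg (α := ℝ) k]
      exact hcor u hu _ (by positivity) h1 (Set.smul_mem_smul_set hv)
    have htend : Filter.Tendsto
        (fun k : ℕ => ((k : ℝ) + 1)⁻¹ • ((u, v) : (Fin n → ℝ) × (Fin m → ℝ)))
        Filter.atTop (nhds 0) := by
      have h1 : Filter.Tendsto (fun k : ℕ => ((k : ℝ) + 1)⁻¹) Filter.atTop (nhds 0) := by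
        simpa [one_div] using (tendsto_one_div_add_atTop_nhds_zero_nat : Filter.Tendsto (fun k : ℕ => 1 / ((k : ℝ) + 1)) Filter.atTop (nhds 0))
      simpa using h1.smul_const ((u, v) : (Fin n → ℝ) × (Fin m → ℝ))
    exact hclosed.mem_of_tendsto htend (Filter.Eventually.of_forall hmem)
  have hxyne : ((x, y) : (Fin n → ℝ) × (Fin m → ℝ)) ≠ 0 := by
    intro h
    apply hxy
    rw [h]  -- ?
    exact h0
  have hnormpos : 0 < ‖((x, y) : (Fin n → ℝ) × (Fin m → ℝ))‖ := norm_pos_iff.mpr hxyne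
  obtain ⟨ε₀, hε₀, hball⟩ := Metric.isOpen_iff.mp hclosed.isOpen_compl (x, y) hxy
  set N := ‖((x, y) : (Fin n → ℝ) × (Fin m → ℝ))‖ with hN
  set ε := min ε₀ N with hε
  have hεpos : 0 < ε := lt_min hε₀ hnormpos
  set P : Set ((Fin n → ℝ) × (Fin m → ℝ)) := {p | 0 ≤ p.1 ∧ 0 ≤ p.2} with hP
  set B : Set ((Fin n → ℝ) × (Fin m → ℝ)) := Metric.ball (x, y) ε with hB
  set K : Set ((Fin n → ℝ) × (Fin m → ℝ)) :=
    {z | ∃ t : ℝ, 0 < t ∧ ∃ p ∈ B ∩ P, z = t • p} with hK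
  have hPconv : Convex ℝ P := by
    intro p hp q hq a b ha hb hab
    exact ⟨add_nonneg (smul_nonneg ha hp.1) (smul_nonneg hb hq.1),
      add_nonneg (smul_nonneg ha hp.2) (smul_nonneg hb hq.2)⟩
  have hBPconv : Convex ℝ (B ∩ P) := (convex_ball _ _).inter hPconv
  -- K ⊆ P
  have hKP : K ⊆ P := by
    rintro z ⟨t, ht, p, ⟨_, hp1, hp2⟩, rfl⟩
    exact ⟨smul_nonneg ht.le hp1, smul_nonneg ht.le hp2⟩
  -- no zero in K
  have hKne : ∀ z ∈ K, z ≠ (0 : (Fin n → ℝ) × (Fin m → ℝ)) := by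
    rintro z ⟨t, ht, p, ⟨hpB, _⟩, rfl⟩
    have hpne : p ≠ 0 := by
      intro h
      rw [h] at hpB
      have hd := Metric.mem_ball.mp hpB
      rw [dist_eq_norm, zero_sub, norm_neg] at hd
      have hεN : ε ≤ N := min_le_right _ _
      rw [hN] at hεN
      linarith
    exact smul_ne_zero ht.ne' hpne
  refine ⟨K, hKP, ?_, ?_, ?_, ?_, ?_⟩
  · -- Convex
    rintro z ⟨t, ht, p, hp, rfl⟩ z' ⟨s, hs, p', hp', rfl⟩ a b ha hb hab
    rcases eq_or_lt_of_le ha with rfl | ha'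
    · simp only [zero_smul, zero_add]
      have : b = 1 := by linarith
      subst this
      rw [one_smul]
      exact ⟨s, hs, p', hp', rfl⟩
    rcases eq_or_lt_of_le hb with rfl | hb'
    · simp only [zero_smul, add_zero]
      have : a = 1 := by linarith
      subst this
      rw [one_smul]
      exact ⟨t, ht, p, hp, rfl⟩
    have hT : 0 < a * t + b * s := by positivity
    refine ⟨a * t + b * s, hT, (a * t / (a * t + b * s)) • p + (b * s / (a * t + b * s)) • p',
      hBPconv hp hp' (by positivity) (by positivity) (by field_simp), ?_⟩
    have hTne : a * t + b * s ≠ 0 := hT.ne'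
    match_scalars <;> field_simp <;> ring
  · -- IsConeSet
    rintro z ⟨t, ht, p, hp, rfl⟩ s hs
    exact ⟨s * t, mul_pos hs ht, p, hp, smul_smul s t p⟩
  · -- (x,y) ∈ K
    exact ⟨1, one_pos, (x, y), ⟨Metric.mem_ball_self hεpos, hx, hy⟩, (one_smul ℝ _).symm⟩
  · -- openness
    refine ⟨⋃ t ∈ Set.Ioi (0:ℝ), t • B, isOpen_biUnion fun t ht => Metric.isOpen_ball.smul₀ (ne_of_gt ht), ?_⟩
    ext z
    constructor
    · rintro ⟨⟨t, ht, p, ⟨hpB, hpP⟩, rfl⟩, _⟩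
      refine ⟨Set.mem_biUnion ht (Set.smul_mem_smul_set hpB), hKP ⟨t, ht, p, ⟨hpB, hpP⟩, rfl⟩⟩
    · rintro ⟨hzU, hzP⟩
      obtain ⟨t, ht, p, hpB, rfl⟩ := by
        simpa using hzU
      have ht' : (0:ℝ) < t := ht
      have hzK : t • p ∈ K := by
        refine ⟨t, ht', p, ⟨hpB, ?_, ?_⟩, rfl⟩
        · have : 0 ≤ t • p.1 := hzP.1
          have h2 : p.1 = t⁻¹ • (t • p.1) := (inv_smul_smul₀ ht'.ne' p.1).symm
          rw [h2]
          exact smul_nonneg (inv_nonneg.mpr ht'.le) this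
        · have : 0 ≤ t • p.2 := hzP.2
          have h2 : p.2 = t⁻¹ • (t • p.2) := (inv_smul_smul₀ ht'.ne' p.2).symm
          rw [h2]
          exact smul_nonneg (inv_nonneg.mpr ht'.le) this
      exact ⟨hzK, hKne _ hzK⟩
  · -- separation
    rw [Set.eq_empty_iff_forall_notMem]
    rintro z ⟨hg, hmem⟩
    rw [Set.mem_add] at hmem
    obtain ⟨a, ha, c, hc, hac⟩ := hmem
    rw [Set.mem_add] at ha
    obtain ⟨w0, hw0, k, hk, hw0k⟩ := ha
    rw [Set.mem_singleton_iff] at hw0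
    subst hw0
    obtain ⟨t, ht, p, ⟨hpB, hp1, hp2⟩, rfl⟩ := hk
    subst hw0k
    subst hac
    -- components of hg
    have hg1 : (0:Fin n → ℝ) ≤ x + t • p.1 + c.1 := hg.1
    have hg2 : y + t • p.2 + c.2 ∈ F (x + t • p.1 + c.1) := hg.2
    have hc1 : c.1 ≤ 0 := hc.1
    have hc2 : (0:Fin m → ℝ) ≤ c.2 := hc.2
    have hxk1 : (0:Fin n → ℝ) ≤ x + t • p.1 := add_nonneg hx (smul_nonneg ht.le hp1)
    have step1 : y + t • p.2 + c.2 ∈ F (x + t • p.1) :=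
      hinc _ _ hg1 (by intro i; have h := hc1 i; simp only [Pi.zero_apply] at h; simp only [Pi.add_apply]; linarith) hg2
    have hyk2 : (0:Fin m → ℝ) ≤ y + t • p.2 := add_nonneg hy (smul_nonneg ht.le hp2)
    have step2 : y + t • p.2 ∈ F (x + t • p.1) :=
      hnorm _ hxk1 _ step1 _ hyk2 (le_add_of_nonneg_right hc2)
    -- rescale
    have h1t : (0:ℝ) < 1 + t := by linarith
    set s := (1 + t)⁻¹ with hsdef
    have hspos : 0 < s := inv_pos.mpr h1t
    have hs1 : s ≤ 1 := by
      rw [hsdef, inv_le_one_iff₀]; right; linarith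
    set w : (Fin n → ℝ) × (Fin m → ℝ) := s • ((x, y) + t • p) with hwdef
    have hw1 : w.1 = s • (x + t • p.1) := rfl
    have hw2mem : w.2 ∈ F w.1 := by
      have := hcor (x + t • p.1) hxk1 s hspos hs1 (Set.smul_mem_smul_set step2)
      exact this
    have hw1n : (0:Fin n → ℝ) ≤ w.1 := by
      rw [hw1]; exact smul_nonneg hspos.le hxk1
    have hwg : w ∈ graph F := ⟨hw1n, hw2mem⟩
    -- w is in the ball
    have h1tne : (1:ℝ) + t ≠ 0 := h1t.ne'
    have key : w - (x, y) = (t * s) • (p - (x, y)) := by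
      rw [hwdef, hsdef]
      match_scalars <;> field_simp <;> ring
    have hts : t * s < 1 := by
      rw [hsdef]
      rw [mul_inv_lt_iff₀ h1t]
      linarith
    have hwB : w ∈ Metric.ball ((x, y) : (Fin n → ℝ) × (Fin m → ℝ)) ε₀ := by
      rw [Metric.mem_ball, dist_eq_norm, key, norm_smul]
      have hd : ‖p - ((x, y) : (Fin n → ℝ) × (Fin m → ℝ))‖ < ε₀ := by
        have := Metric.mem_ball.mp hpB
        rw [dist_eq_norm] at this
        exact lt_of_lt_of_le this (min_le_left _ _)
      calc |t * s| * ‖p - ((x, y) : (Fin n → ℝ) × (Fin m → ℝ))‖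
          ≤ 1 * ‖p - ((x, y) : (Fin n → ℝ) × (Fin m → ℝ))‖ := by
            apply mul_le_mul_of_nonneg_right _ (norm_nonneg _)
            rw [abs_of_pos (mul_pos ht hspos)]
            exact hts.le
        _ < ε₀ := by rw [one_mul]; exact hd
    exact hball hwB hwg
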